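/- Let l : ℝ^d → ℝ be twice continuously differentiable and suppose there is a symmetric PSD matrix L and κ > 0 such that ∇²l(x) ⪰ κ·L for all x (i.e., zᵀ∇²l(x)z ≥ κ·zᵀLz for all z). If x* is a global minimizer of l and x̂ is any point, then ‖x̂ − x*‖_L ≤ (1/κ)·‖∇l(x̂)‖_{L†}, where L† is the Moore–Penrose pseudoinverse, provided x̂ − x* lies in the column space of L. -/

import Mathlib

open Matrix Set

private lemma mulVec_dot_aux {d : ℕ} (A : Matrix (Fin d) (Fin d) ℝ) (x w : Fin d → ℝ) :
    (A *ᵥ x) ⬝ᵥ w = x ⬝ᵥ (Aᵀ *ᵥ w) := by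
  rw [dotProduct_comm, dotProduct_mulVec, ← mulVec_transpose, dotProduct_comm]

private lemma dot_cs_aux {d : ℕ} (x y : Fin d → ℝ) :
    x ⬝ᵥ y ≤ Real.sqrt (x ⬝ᵥ x) * Real.sqrt (y ⬝ᵥ y) := by
  have h : (x ⬝ᵥ y) ^ 2 ≤ (x ⬝ᵥ x) * (y ⬝ᵥ y) := by
    have := Finset.sum_mul_sq_le_sq_mul_sq Finset.univ x y
    simpa [dotProduct, pow_two] using this
  calc x ⬝ᵥ y ≤ |x ⬝ᵥ y| := le_abs_self _
    _ = Real.sqrt ((x ⬝ᵥ y) ^ 2) := (Real.sqrt_sq_eq_abs _).symm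
    _ ≤ Real.sqrt ((x ⬝ᵥ x) * (y ⬝ᵥ y)) := Real.sqrt_le_sqrt h
    _ = Real.sqrt (x ⬝ᵥ x) * Real.sqrt (y ⬝ᵥ y) := by
        refine Real.sqrt_mul ?_ _
        exact Finset.sum_nonneg fun i _ => mul_self_nonneg _

open scoped MatrixOrder in
private lemma psd_cs_aux {d : ℕ} {M : Matrix (Fin d) (Fin d) ℝ} (hM : M.PosSemidef)
    (a b : Fin d → ℝ) :
    a ⬝ᵥ (M *ᵥ b) ≤ Real.sqrt (a ⬝ᵥ (M *ᵥ a)) * Real.sqrt (b ⬝ᵥ (M *ᵥ b)) := by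
  set S := CFC.sqrt M with hSdef
  have hS : Sᵀ = S := by
    have := (CFC.sqrt_nonneg M).posSemidef.1
    simpa [Matrix.IsHermitian] using this
  have hSS : S * S = M := CFC.sqrt_mul_sqrt_self M hM.nonneg
  have key : ∀ u w : Fin d → ℝ, u ⬝ᵥ (M *ᵥ w) = (S *ᵥ u) ⬝ᵥ (S *ᵥ w) := by
    intro u w
    rw [mulVec_dot_aux, hS, mulVec_mulVec, hSS]
  rw [key a b, key a a, key b b]
  exact dot_cs_aux _ _

private lemma pinv_symm_aux {d : ℕ} {L Ldag : Matrix (Fin d) (Fin d) ℝ} (hsym : L.IsSymm)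
    (hP1 : L * Ldag * L = L) (hP2 : Ldag * L * Ldag = Ldag)
    (hP3 : (L * Ldag)ᵀ = L * Ldag) (hP4 : (Ldag * L)ᵀ = Ldag * L) :
    Ldagᵀ = Ldag := by
  have hLt : Lᵀ = L := hsym
  have hCA : Ldagᵀ * L = L * Ldag := by rw [← hP3, transpose_mul, hLt]
  have hAC : L * Ldagᵀ = Ldag * L := by rw [← hP4, transpose_mul, hLt]
  have hC2 : Ldagᵀ * L * Ldagᵀ = Ldagᵀ := by
    have h := congrArg Matrix.transpose hP2
    rw [transpose_mul, transpose_mul, hLt] at h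
    rw [Matrix.mul_assoc]
    exact h
  have hABAC : L * Ldag = L * Ldagᵀ := by
    calc L * Ldag = Ldagᵀ * L := hCA.symm
      _ = Ldagᵀ * (L * Ldag * L) := by rw [hP1]
      _ = (Ldagᵀ * L) * (Ldag * L) := by simp only [Matrix.mul_assoc]
      _ = (L * Ldag) * (L * Ldagᵀ) := by rw [hCA, hAC]
      _ = (L * Ldag * L) * Ldagᵀ := by simp only [Matrix.mul_assoc]
      _ = L * Ldagᵀ := by rw [hP1]
  have hBACA : Ldag * L = Ldagᵀ * L := by
    calc Ldag * L = (Ldag * L)ᵀ := hP4.symm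
      _ = L * Ldagᵀ := by rw [transpose_mul, hLt]
      _ = (L * Ldag * L) * Ldagᵀ := by rw [hP1]
      _ = (L * Ldag) * (L * Ldagᵀ) := by simp only [Matrix.mul_assoc]
      _ = (Ldagᵀ * L) * (Ldag * L) := by rw [hCA, hAC]
      _ = Ldagᵀ * (L * Ldag * L) := by simp only [Matrix.mul_assoc]
      _ = Ldagᵀ * L := by rw [hP1]
  calc Ldagᵀ = Ldagᵀ * L * Ldagᵀ := hC2.symm
    _ = (Ldag * L) * Ldagᵀ := by rw [hBACA]
    _ = Ldag * (L * Ldagᵀ) := by rw [Matrix.mul_assoc]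
    _ = Ldag * (L * Ldag) := by rw [← hABAC]
    _ = Ldag * L * Ldag := by rw [Matrix.mul_assoc]
    _ = Ldag := hP2

/-- Upper bound for M-estimators: if `l` is `C²` with Hessian bounded below by `κ L`
(`L` symmetric PSD, `κ > 0`), `xstar` is a global minimizer of `l`, `g` is the
gradient of `l` at `xhat`, `Ldag` is the Moore–Penrose pseudoinverse of `L`
(characterized by the four Penrose equations), and `xhat − xstar` lies in the
column space of `L`, then `‖xhat − xstar‖_L ≤ (1/κ) ‖g‖_{L†}`. -/
theorem m_estimator_upper_bound (d : ℕ)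
    (l : (Fin d → ℝ) → ℝ) (hl : ContDiff ℝ 2 l)
    (L Ldag : Matrix (Fin d) (Fin d) ℝ) (hsym : L.IsSymm) (hpsd : L.PosSemidef)
    (hP1 : L * Ldag * L = L) (hP2 : Ldag * L * Ldag = Ldag)
    (hP3 : (L * Ldag)ᵀ = L * Ldag) (hP4 : (Ldag * L)ᵀ = Ldag * L)
    (κ : ℝ) (hκ : 0 < κ)
    (hhess : ∀ x z : Fin d → ℝ,
      κ * (z ⬝ᵥ (L *ᵥ z)) ≤ (iteratedFDeriv ℝ 2 l x) ![z, z])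
    (xstar xhat : Fin d → ℝ) (hmin : ∀ x, l xstar ≤ l x)
    (g : Fin d → ℝ) (hg : ∀ z, fderiv ℝ l xhat z = g ⬝ᵥ z)
    (hcol : ∃ y : Fin d → ℝ, xhat - xstar = L *ᵥ y) :
    Real.sqrt ((xhat - xstar) ⬝ᵥ (L *ᵥ (xhat - xstar)))
      ≤ (1 / κ) * Real.sqrt (g ⬝ᵥ (Ldag *ᵥ g)) := by
  obtain ⟨y, hy⟩ := hcol
  set v : Fin d → ℝ := xhat - xstar with hv
  have hDsym : Ldagᵀ = Ldag := pinv_symm_aux hsym hP1 hP2 hP3 hP4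
  -- Step 1: analysis — κ * vᵀLv ≤ g ⬝ᵥ v
  have hstep1 : κ * (v ⬝ᵥ (L *ᵥ v)) ≤ g ⬝ᵥ v := by
    set φ : ℝ → ℝ := fun s => fderiv ℝ l (xstar + s • v) v with hφdef
    have hφ' : ∀ t : ℝ, HasDerivAt φ (fderiv ℝ (fderiv ℝ l) (xstar + t • v) v v) t := by
      intro t
      have hF : ContDiff ℝ 1 (fderiv ℝ l) := hl.fderiv_right (by norm_num)
      have hγ : HasDerivAt (fun s : ℝ => xstar + s • v) v t := by
        simpa using ((hasDerivAt_id t).smul_const v).const_add xstar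
      have h1 : HasFDerivAt (fderiv ℝ l) (fderiv ℝ (fderiv ℝ l) (xstar + t • v))
          (xstar + t • v) := (hF.differentiable (by norm_num) _).hasFDerivAt
      have h2 : HasDerivAt (fun s : ℝ => fderiv ℝ l (xstar + s • v))
          (fderiv ℝ (fderiv ℝ l) (xstar + t • v) v) t := h1.comp_hasDerivAt t hγ
      simpa using h2.clm_apply (hasDerivAt_const t v)
    obtain ⟨c, _, hc⟩ := exists_hasDerivAt_eq_slope φ
      (fun t => fderiv ℝ (fderiv ℝ l) (xstar + t • v) v v) (by norm_num : (0:ℝ) < 1)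
      (fun t _ => (hφ' t).continuousAt.continuousWithinAt) (fun t _ => hφ' t)
    have hφ0 : φ 0 = 0 := by
      have h : IsLocalMin l xstar := Filter.Eventually.of_forall hmin
      have : fderiv ℝ l xstar = 0 := h.fderiv_eq_zero
      simp [hφdef, this]
    have hφ1 : φ 1 = g ⬝ᵥ v := by
      have hx : xstar + v = xhat := by rw [hv]; abel
      simp only [hφdef, one_smul, hx, hg]
    have hlow : κ * (v ⬝ᵥ (L *ᵥ v)) ≤ fderiv ℝ (fderiv ℝ l) (xstar + c • v) v v := by
      have := hhess (xstar + c • v) v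
      rwa [iteratedFDeriv_two_apply, show (![v, v] : Fin 2 → Fin d → ℝ) 0 = v from rfl,
        show (![v, v] : Fin 2 → Fin d → ℝ) 1 = v from rfl] at this
    rw [hc, hφ1, hφ0] at hlow
    calc κ * (v ⬝ᵥ (L *ᵥ v)) ≤ (g ⬝ᵥ v - 0) / (1 - 0) := hlow
      _ = g ⬝ᵥ v := by ring
  -- Step 2: g ⬝ᵥ v = (Ldag *ᵥ g) ⬝ᵥ (L *ᵥ v)
  have hvproj : (L * Ldag) *ᵥ v = v := by
    rw [hv] at hy ⊢
    rw [hy, mulVec_mulVec, hP1]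
  have hstep2 : g ⬝ᵥ v = (Ldag *ᵥ g) ⬝ᵥ (L *ᵥ v) := by
    calc g ⬝ᵥ v = g ⬝ᵥ ((L * Ldag) *ᵥ v) := by rw [hvproj]
      _ = ((L * Ldag)ᵀ *ᵥ g) ⬝ᵥ v := by
          rw [mulVec_dot_aux]
          rw [transpose_transpose]
      _ = ((L * Ldag) *ᵥ g) ⬝ᵥ v := by rw [hP3]
      _ = (Ldag *ᵥ g) ⬝ᵥ (L *ᵥ v) := by
          rw [← mulVec_mulVec, mulVec_dot_aux L, hsym.eq, dotProduct_mulVec,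
            ← mulVec_transpose, hsym.eq]
  -- Step 3: the middle quadratic form equals g ⬝ᵥ Ldag g
  have hstep3 : (Ldag *ᵥ g) ⬝ᵥ (L *ᵥ (Ldag *ᵥ g)) = g ⬝ᵥ (Ldag *ᵥ g) := by
    rw [mulVec_mulVec, mulVec_dot_aux, mulVec_mulVec, hDsym, ← Matrix.mul_assoc, hP2]
  -- Combine via Cauchy–Schwarz
  have hCS : (Ldag *ᵥ g) ⬝ᵥ (L *ᵥ v)
      ≤ Real.sqrt (g ⬝ᵥ (Ldag *ᵥ g)) * Real.sqrt (v ⬝ᵥ (L *ᵥ v)) := by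
    have := psd_cs_aux hpsd (Ldag *ᵥ g) v
    rwa [hstep3] at this
  have hvnn : 0 ≤ v ⬝ᵥ (L *ᵥ v) := by simpa using hpsd.dotProduct_mulVec_nonneg v
  have hgnn : 0 ≤ g ⬝ᵥ (Ldag *ᵥ g) := by
    rw [← hstep3]; simpa using hpsd.dotProduct_mulVec_nonneg (Ldag *ᵥ g)
  set a := Real.sqrt (v ⬝ᵥ (L *ᵥ v)) with ha
  set b := Real.sqrt (g ⬝ᵥ (Ldag *ᵥ g)) with hb
  have hva : v ⬝ᵥ (L *ᵥ v) = a ^ 2 := (Real.sq_sqrt hvnn).symm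
  have hanneg : 0 ≤ a := Real.sqrt_nonneg _
  have hbnneg : 0 ≤ b := Real.sqrt_nonneg _
  have hkey : κ * a ^ 2 ≤ b * a := by
    rw [← hva]
    calc κ * (v ⬝ᵥ (L *ᵥ v)) ≤ g ⬝ᵥ v := hstep1
      _ = (Ldag *ᵥ g) ⬝ᵥ (L *ᵥ v) := hstep2
      _ ≤ b * a := hCS
  rcases eq_or_lt_of_le hanneg with h0 | h0
  · rw [← h0]
    positivity
  · rw [one_div, inv_mul_eq_div, le_div_iff₀ hκ]
    nlinarith [hkey, h0]
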